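/- For the modified tent map f with h > 2 and δ ≥ 0, every point x in [δ, 2+δ] is mapped under f into [0, h] ; moreover the set of points whose entire forward orbit stays in the interval [δ, 1+δ] ∪ [1+δ, 2+δ] where f(x) ≥ δ (i.e. never falls into the flat region [0,δ)) has Lebesgue measure zero, so Lebesgue-almost every initial condition in [0, 2+δ] eventually reaches the fixed point 0. -/

import Mathlib

open MeasureTheory

/-- The modified tent map with slope `h` and offset `δ`. -/
noncomputable def tentMap (h δ : ℝ) (x : ℝ) : ℝ :=
  if δ ≤ x ∧ x < 1 + δ then h * (x - δ)
  else if 1 + δ ≤ x then -h * (x - 2 - δ)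
  else 0

lemma tentMap_measurable (h δ : ℝ) : Measurable (tentMap h δ) := by
  unfold tentMap
  refine Measurable.ite ?_ (by fun_prop) (Measurable.ite measurableSet_Ici (by fun_prop)
    (by fun_prop))
  exact (measurableSet_Ico : MeasurableSet (Set.Ico δ (1 + δ)))

lemma volume_preimage_affine (a b : ℝ) (ha : a ≠ 0) (A : Set ℝ) :
    volume ((fun x => a * x + b) ⁻¹' A) = ENNReal.ofReal |a⁻¹| * volume A := by
  have : (fun x : ℝ => a * x + b) ⁻¹' A = (fun x : ℝ => a * x) ⁻¹' ((fun y : ℝ => y + b) ⁻¹' A) :=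
    rfl
  rw [this, Real.volume_preimage_mul_left ha, measure_preimage_add_right]

theorem tentMap_almost_all_escape (h δ : ℝ) (hh : 2 < h) (hδ : 0 ≤ δ) :
    -- f maps [δ, 2+δ] into [0, h]
    (∀ x ∈ Set.Icc δ (2 + δ), tentMap h δ x ∈ Set.Icc 0 h) ∧
    -- the set of points whose orbit never falls below δ has measure zero
    volume {x ∈ Set.Icc δ (2 + δ) | ∀ n : ℕ, δ ≤ (tentMap h δ)^[n] x} = 0 ∧
    -- consequently a.e. x in [0, 2+δ] eventually reaches the fixed point 0
    (∀ᵐ x ∂(volume.restrict (Set.Icc 0 (2 + δ))),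
      ∃ n : ℕ, (tentMap h δ)^[n + 1] x = 0) := by
  have hh0 : (0:ℝ) < h := by linarith
  set f := tentMap h δ with hf
  have hmeas : Measurable f := tentMap_measurable h δ
  -- part 1
  have part1 : ∀ x ∈ Set.Icc δ (2 + δ), tentMap h δ x ∈ Set.Icc 0 h := by
    intro x hx
    obtain ⟨hx1, hx2⟩ := hx
    unfold tentMap
    split_ifs with h1 h2
    · exact ⟨by nlinarith [h1.1], by nlinarith [h1.2]⟩
    · exact ⟨by nlinarith, by nlinarith⟩
    · exact ⟨le_rfl, hh0.le⟩
  -- key: if y < δ then f y = 0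
  have hflat : ∀ y : ℝ, ¬ δ ≤ y → f y = 0 := by
    intro y hy
    have h1 : ¬ (δ ≤ y ∧ y < 1 + δ) := fun hc => hy hc.1
    have h2 : ¬ (1 + δ ≤ y) := fun hc => hy (by linarith)
    simp [hf, tentMap, h1, h2]
  set S := {x ∈ Set.Icc δ (2 + δ) | ∀ n : ℕ, δ ≤ f^[n] x} with hS
  -- S is invariant-ish: S ⊆ branches
  have hmapS : ∀ x ∈ S, f x ∈ S := by
    rintro x ⟨hx, horb⟩
    have h1 : δ ≤ f x := by simpa using horb 1
    have h2 : δ ≤ f (f x) := by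
      have := horb 2
      simpa [Function.iterate_succ_apply'] using this
    have hle : f x ≤ 2 + δ := by
      by_contra hc
      push_neg at hc
      have hcond1 : ¬ (δ ≤ f x ∧ f x < 1 + δ) := fun hc2 => by linarith [hc2.2]
      have : f (f x) = -h * (f x - 2 - δ) := by
        show tentMap h δ (f x) = _
        unfold tentMap
        rw [if_neg hcond1, if_pos (by linarith : 1 + δ ≤ f x)]
      nlinarith
    refine ⟨⟨h1, hle⟩, fun n => ?_⟩
    have := horb (n + 1)
    simpa [Function.iterate_succ_apply] using this
  have hsub : S ⊆ ((fun x => h * x + (-(h * δ))) ⁻¹' S) ∪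
      ((fun x => (-h) * x + h * (2 + δ)) ⁻¹' S) := by
    intro x hxS
    obtain ⟨⟨hx1, hx2⟩, horb⟩ := hxS
    have hfx : f x ∈ S := hmapS x ⟨⟨hx1, hx2⟩, horb⟩
    by_cases hc : x < 1 + δ
    · left
      have : f x = h * x + (-(h * δ)) := by
        rw [hf]; unfold tentMap; rw [if_pos ⟨hx1, hc⟩]; ring
      rwa [Set.mem_preimage, ← this]
    · right
      push_neg at hc
      have : f x = (-h) * x + h * (2 + δ) := by
        rw [hf]; unfold tentMap
        rw [if_neg (fun hc2 => absurd hc2.2 (not_lt.2 hc)), if_pos hc]; ring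
      rwa [Set.mem_preimage, ← this]
  -- measure bound
  have hvol_le : volume S ≤ ENNReal.ofReal (2 / h) * volume S := by
    calc volume S ≤ volume ((fun x => h * x + (-(h * δ))) ⁻¹' S) +
        volume ((fun x => (-h) * x + h * (2 + δ)) ⁻¹' S) :=
          le_trans (measure_mono hsub) (measure_union_le _ _)
      _ = ENNReal.ofReal |h⁻¹| * volume S + ENNReal.ofReal |(-h)⁻¹| * volume S := by
          rw [volume_preimage_affine h _ (ne_of_gt hh0),
            volume_preimage_affine (-h) _ (by simp [ne_of_gt hh0])]
      _ = ENNReal.ofReal (2 / h) * volume S := by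
          rw [abs_of_pos (by positivity : (0:ℝ) < h⁻¹)]
          rw [show |(-h)⁻¹| = h⁻¹ by rw [abs_inv, abs_neg, abs_of_pos hh0]]
          rw [← add_mul, ← ENNReal.ofReal_add (by positivity) (by positivity)]
          congr 1; congr 1; ring
  have hSfin : volume S ≠ ⊤ := by
    have : volume S ≤ volume (Set.Icc δ (2 + δ)) :=
      measure_mono (fun x hx => hx.1)
    exact ne_top_of_le_ne_top (by simp) this
  have part2 : volume S = 0 := by
    by_contra h0
    have hlt : ENNReal.ofReal (2 / h) < 1 := by
      rw [ENNReal.ofReal_lt_one]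
      rw [div_lt_one hh0]; linarith
    have : ENNReal.ofReal (2 / h) * volume S < 1 * volume S :=
      by rw [mul_comm _ (volume S), mul_comm 1]; exact ENNReal.mul_lt_mul_right h0 hSfin hlt
    rw [one_mul] at this
    exact absurd (lt_of_le_of_lt hvol_le this) (lt_irrefl _)
  refine ⟨part1, part2, ?_⟩
  -- part 3
  rw [MeasureTheory.ae_restrict_iff' measurableSet_Icc, MeasureTheory.ae_iff]
  refine measure_mono_null ?_ part2
  intro x hx
  simp only [Set.mem_setOf_eq, Classical.not_imp] at hx
  obtain ⟨⟨hx0, hx2⟩, hnone⟩ := hx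
  push_neg at hnone
  have horb : ∀ n : ℕ, δ ≤ f^[n] x := by
    intro n
    by_contra hc
    apply hnone n
    rw [Function.iterate_succ_apply', hflat _ hc]
  exact ⟨⟨horb 0, hx2⟩, horb⟩
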